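/- arXiv:1512.02802 — 2 statements merged into one kernel-verified Lean document; each statement's English description precedes it below -/
import Mathlib

section
/- Let U_t = S^{(n,a)}(C_t ⊗ I_n), where C_t is any unitary coin on C^3, act on a state ρ whose matrix elements satisfy ⟨i, e_m| ρ |j, e_m⟩ = (1/3) a_m δ_{ij} in the basis of coin states |i⟩ tensored with Fourier eigenvectors |e_m⟩ of the shifts. Then U_t ρ U_t† satisfies the same property: ⟨i, e_m| U_t ρ U_t† |j, e_m⟩ = (1/3) a_m δ_{ij}. -/
open Matrix Kronecker Complex

def livelyDelta (n : ℕ) (a : ℕ) : Fin 3 → ZMod n :=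
  fun c => if c = 0 then -1 else if c = 1 then 1 else (a : ZMod n)

def livelyShift (n : ℕ) (a : ℕ) :
    Matrix (Fin 3 × ZMod n) (Fin 3 × ZMod n) ℂ :=
  fun p q => if p.1 = q.1 ∧ p.2 = q.2 + livelyDelta n a p.1 then 1 else 0

noncomputable def fourierVec (n : ℕ) : ZMod n → ZMod n → ℂ :=
  fun m x => (1 / Real.sqrt n) *
    Complex.exp (2 * Real.pi * Complex.I * m.val * x.val / n)

def coinTensor {n : ℕ} (i : Fin 3) (φ : ZMod n → ℂ) : Fin 3 × ZMod n → ℂ :=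
  fun p => (if p.1 = i then 1 else 0) * φ p.2

/-! ### Auxiliary lemmas -/

noncomputable def phaseOf (n : ℕ) (m d : ZMod n) : ℂ :=
  Complex.exp (2 * Real.pi * Complex.I * m.val * d.val / n)

lemma phaseOf_conj_mul (n : ℕ) (m d : ZMod n) :
    (starRingEnd ℂ) (phaseOf n m d) * phaseOf n m d = 1 := by
  rw [phaseOf, ← Complex.exp_conj, ← Complex.exp_add, ← Complex.exp_zero]
  congr 1
  have : (starRingEnd ℂ) (2 * Real.pi * Complex.I * m.val * d.val / n)
      = -(2 * Real.pi * Complex.I * m.val * d.val / n) := by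
    simp [map_div₀, _root_.map_mul, Complex.conj_I, Complex.conj_ofReal, map_ofNat]
    ring
  rw [this]; ring

lemma fourierVec_add (n : ℕ) [NeZero n] (m x d : ZMod n) :
    fourierVec n m (x + d) = phaseOf n m d * fourierVec n m x := by
  have hn : (n : ℂ) ≠ 0 := Nat.cast_ne_zero.mpr (NeZero.ne n)
  set t : ℕ := (x.val + d.val) / n with ht
  have hv : ((x.val : ℂ) + d.val) = ((x + d).val : ℂ) + n * t := by
    have h1 : (x + d).val + n * t = x.val + d.val := by
      rw [ZMod.val_add, ht]; exact Nat.mod_add_div _ _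
    exact_mod_cast h1.symm
  unfold fourierVec phaseOf
  have key : 2 * (Real.pi:ℂ) * Complex.I * m.val * d.val / n
        + 2 * Real.pi * Complex.I * m.val * x.val / n
      = 2 * Real.pi * Complex.I * m.val * ((x + d).val : ℂ) / n
        + ((m.val * t : ℕ) : ℂ) * (2 * Real.pi * Complex.I) := by
    field_simp
    simp only [ZMod.natCast_val] at hv ⊢
    push_cast [ZMod.natCast_val]
    linear_combination (ZMod.cast m : ℂ) * hv
  have hexp : Complex.exp (2 * Real.pi * Complex.I * m.val * d.val / n)
      * Complex.exp (2 * Real.pi * Complex.I * m.val * x.val / n)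
      = Complex.exp (2 * Real.pi * Complex.I * m.val * ((x + d).val : ℂ) / n) := by
    rw [← Complex.exp_add, key, Complex.exp_add]
    have h1 := Complex.exp_int_mul_two_pi_mul_I ((m.val * t : ℕ) : ℤ)
    push_cast at h1 ⊢
    rw [h1, mul_one]
  rw [← hexp]; ring

lemma U_apply (n : ℕ) [NeZero n] (a : ℕ) (Ct : Matrix (Fin 3) (Fin 3) ℂ)
    (q p : Fin 3 × ZMod n) :
    (livelyShift n a * (Ct ⊗ₖ (1 : Matrix (ZMod n) (ZMod n) ℂ))) q p
      = Ct q.1 p.1 * (if q.2 = p.2 + livelyDelta n a q.1 then 1 else 0) := by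
  rw [Matrix.mul_apply]
  rw [Fintype.sum_prod_type]
  simp [livelyShift, Matrix.one_apply, ite_and, Finset.sum_ite_eq, kroneckerMap_apply]

lemma U_adj_mulVec (n : ℕ) [NeZero n] (a : ℕ) (Ct : Matrix (Fin 3) (Fin 3) ℂ)
    (j : Fin 3) (m : ZMod n) :
    ((livelyShift n a * (Ct ⊗ₖ (1 : Matrix (ZMod n) (ZMod n) ℂ)))ᴴ).mulVec
      (coinTensor j (fourierVec n m)) =
    ∑ k : Fin 3, (phaseOf n m (livelyDelta n a j) * (starRingEnd ℂ) (Ct j k)) •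
      coinTensor k (fourierVec n m) := by
  funext p
  have hL : (((livelyShift n a * (Ct ⊗ₖ (1 : Matrix (ZMod n) (ZMod n) ℂ)))ᴴ).mulVec
      (coinTensor j (fourierVec n m))) p
      = (starRingEnd ℂ) (Ct j p.1) * fourierVec n m (p.2 + livelyDelta n a j) := by
    rw [Matrix.mulVec, dotProduct, Fintype.sum_prod_type]
    simp only [Matrix.conjTranspose_apply, U_apply, coinTensor, star_mul']
    simp only [apply_ite (starRingEnd ℂ), _root_.map_one, _root_.map_zero, ite_mul, mul_ite,
      one_mul, mul_one, zero_mul, mul_zero]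
    simp [Finset.sum_ite_eq, Finset.sum_ite_eq', mul_comm]
  rw [hL, fourierVec_add]
  simp only [Finset.sum_apply, Pi.smul_apply, coinTensor, smul_eq_mul]
  rw [Finset.sum_eq_single p.1]
  · simp; ring
  · intro k _ hk; simp [Ne.symm hk]
  · simp

lemma sum_dot {ι P : Type*} [Fintype P] (s : Finset ι) (w : ι → P → ℂ) (u : P → ℂ) :
    (∑ l ∈ s, w l) ⬝ᵥ u = ∑ l ∈ s, w l ⬝ᵥ u := by
  simp only [dotProduct, Finset.sum_apply, Finset.sum_mul]
  exact Finset.sum_comm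

lemma dot_sum {ι P : Type*} [Fintype P] (s : Finset ι) (u : P → ℂ) (w : ι → P → ℂ) :
    u ⬝ᵥ (∑ l ∈ s, w l) = ∑ l ∈ s, u ⬝ᵥ w l := by
  simp only [dotProduct, Finset.sum_apply, Finset.mul_sum]
  exact Finset.sum_comm

theorem matrix_elements_invariant_under_step (n : ℕ) [NeZero n] (a : ℕ)
    (ha : a ≤ n - 1) (Ct : Matrix (Fin 3) (Fin 3) ℂ)
    (hC : Ct ∈ Matrix.unitaryGroup (Fin 3) ℂ)
    (ρ : Matrix (Fin 3 × ZMod n) (Fin 3 × ZMod n) ℂ) (am : ZMod n → ℂ)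
    (hρ : ∀ (i j : Fin 3) (m : ZMod n),
      star (coinTensor i (fourierVec n m)) ⬝ᵥ ρ.mulVec (coinTensor j (fourierVec n m)) =
        (1 / 3 : ℂ) * am m * (if i = j then 1 else 0)) :
    ∀ (i j : Fin 3) (m : ZMod n),
      star (coinTensor i (fourierVec n m)) ⬝ᵥ
        ((livelyShift n a * (Ct ⊗ₖ (1 : Matrix (ZMod n) (ZMod n) ℂ))) * ρ *
          (livelyShift n a * (Ct ⊗ₖ (1 : Matrix (ZMod n) (ZMod n) ℂ)))ᴴ).mulVec
          (coinTensor j (fourierVec n m)) =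
        (1 / 3 : ℂ) * am m * (if i = j then 1 else 0) := by
  intro i j m
  set U : Matrix (Fin 3 × ZMod n) (Fin 3 × ZMod n) ℂ :=
    livelyShift n a * (Ct ⊗ₖ (1 : Matrix (ZMod n) (ZMod n) ℂ)) with hU
  set v : Fin 3 → (Fin 3 × ZMod n → ℂ) := fun k => coinTensor k (fourierVec n m) with hv
  set c : Fin 3 → Fin 3 → ℂ :=
    fun r k => phaseOf n m (livelyDelta n a r) * (starRingEnd ℂ) (Ct r k) with hc
  have hw : ∀ k, (Uᴴ).mulVec (v k) = ∑ l : Fin 3, c k l • v l := fun k =>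
    U_adj_mulVec n a Ct k m
  have h1 : star (v i) ⬝ᵥ ((U * ρ * Uᴴ).mulVec (v j))
      = star ((Uᴴ).mulVec (v i)) ⬝ᵥ (ρ.mulVec ((Uᴴ).mulVec (v j))) := by
    rw [Matrix.mul_assoc, ← Matrix.mulVec_mulVec, Matrix.dotProduct_mulVec,
      Matrix.star_mulVec, Matrix.conjTranspose_conjTranspose, Matrix.mulVec_mulVec]
  show star (v i) ⬝ᵥ ((U * ρ * Uᴴ).mulVec (v j)) = _
  rw [h1, hw i, hw j]
  have hρsum : ρ.mulVec (∑ l : Fin 3, c j l • v l)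
      = ∑ l : Fin 3, c j l • ρ.mulVec (v l) := by
    rw [← Matrix.mulVecLin_apply, map_sum]
    simp [Matrix.mulVecLin_apply]
  rw [hρsum, star_sum]
  simp only [star_smul, star_trivial]
  rw [sum_dot]
  simp only [dot_sum, smul_dotProduct, dotProduct_smul, smul_eq_mul]
  have hterm : ∀ l k : Fin 3, star (v l) ⬝ᵥ ρ.mulVec (v k)
      = (1 / 3 : ℂ) * am m * (if l = k then 1 else 0) := fun l k => hρ l k m
  simp only [hterm]
  have hCC : ∀ k : Fin 3, (starRingEnd ℂ) (c i k) * c j k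
      = (starRingEnd ℂ) (phaseOf n m (livelyDelta n a i)) * phaseOf n m (livelyDelta n a j)
        * (Ct i k * (starRingEnd ℂ) (Ct j k)) := by
    intro k; simp only [hc, _root_.map_mul, RingHom.id_apply, Complex.conj_conj]; ring
  have hsum : ∑ k : Fin 3, Ct i k * (starRingEnd ℂ) (Ct j k)
      = (if i = j then 1 else 0) := by
    have h := (Matrix.mem_unitaryGroup_iff).mp hC
    have h2 := congrFun (congrFun h i) j
    rw [Matrix.mul_apply] at h2
    simp only [Matrix.star_apply, Matrix.one_apply, Complex.star_def] at h2
    rw [h2]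
  have step : ∀ l : Fin 3, ∑ k : Fin 3,
      c j k * ((1/3 : ℂ) * am m * if l = k then 1 else 0)
      = c j l * ((1/3 : ℂ) * am m) := by
    intro l
    rw [Finset.sum_eq_single l]
    · simp
    · intro k _ hkl; simp [Ne.symm hkl]
    · simp
  simp only [step]
  have expand : ∑ l : Fin 3, (starRingEnd ℂ) (c i l) * (c j l * ((1/3:ℂ) * am m))
      = ((starRingEnd ℂ) (phaseOf n m (livelyDelta n a i)) * phaseOf n m (livelyDelta n a j)
          * ((1/3:ℂ) * am m)) * ∑ l : Fin 3, Ct i l * (starRingEnd ℂ) (Ct j l) := by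
    rw [Finset.mul_sum]
    refine Finset.sum_congr rfl fun l _ => ?_
    linear_combination ((1/3:ℂ) * am m) * hCC l
  simp only [Complex.star_def]
  rw [expand, hsum]
  by_cases hij : i = j
  · subst hij
    simp only [eq_self_iff_true, if_true, mul_one]
    linear_combination ((1/3:ℂ) * am m) * phaseOf_conj_mul n m (livelyDelta n a i)
  · simp [hij]
end

section
/- Consider the lively quantum walk with liveliness a ≠ 0, arbitrary time-dependent unitary coins C_t, and initial state ρ₀ = (I₃/3) ⊗ |x₀⟩⟨x₀|. Then the expected position (measured as a winding/displacement, not modulo n) drifts at constant rate: E(X^{ρ_{t+1}}) − E(X^{ρ_t}) = a/3 ≠ 0 for all t. In particular, the walk cannot be trapped. -/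
open Matrix Kronecker Complex

def posKet (n : ℕ) (x₀ : ZMod n) : ZMod n → ℂ := fun x => if x = x₀ then 1 else 0

/-- The initial state `ρ₀ = (I₃/3) ⊗ |x₀⟩⟨x₀|`. -/
noncomputable def rhoInit (n : ℕ) (x₀ : ZMod n) :
    Matrix (Fin 3 × ZMod n) (Fin 3 × ZMod n) ℂ :=
  ((1 : ℝ) / 3 : ℂ) • ((1 : Matrix (Fin 3) (Fin 3) ℂ) ⊗ₖ
    Matrix.vecMulVec (posKet n x₀) (star (posKet n x₀)))

/-- The (integer-valued) displacement associated with each coin value. -/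
def intDelta (a : ℕ) : Fin 3 → ℤ := ![-1, 1, (a : ℤ)]

/-- Expected (ℤ-lifted) one-step displacement of the walker in state `ρ`
just before the shift, i.e. after the coin operation `Ct` has been applied:
probability of coin outcome `c` times the displacement `Δ_c`, summed. -/
noncomputable def expectedDrift (n : ℕ) [NeZero n] (a : ℕ)
    (Ct : Matrix (Fin 3) (Fin 3) ℂ)
    (ρ : Matrix (Fin 3 × ZMod n) (Fin 3 × ZMod n) ℂ) : ℝ :=
  ∑ c : Fin 3, (intDelta a c : ℝ) * ∑ x : ZMod n,
    (((Ct ⊗ₖ (1 : Matrix (ZMod n) (ZMod n) ℂ)) * ρ *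
      (Ct ⊗ₖ (1 : Matrix (ZMod n) (ZMod n) ℂ))ᴴ) (c, x) (c, x)).re

/-- The invariant: all shifted partial traces over position equal `(1/3)δ_{ij}δ_{d0}`. -/
def LWInv (n : ℕ) [NeZero n] (ρ : Matrix (Fin 3 × ZMod n) (Fin 3 × ZMod n) ℂ) : Prop :=
  ∀ (d : ZMod n) (i j : Fin 3),
    ∑ x : ZMod n, ρ (i, x) (j, x + d) = if i = j ∧ d = 0 then (1/3 : ℂ) else 0

lemma coin_entry (n : ℕ) [NeZero n] (C : Matrix (Fin 3) (Fin 3) ℂ)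
    (ρ : Matrix (Fin 3 × ZMod n) (Fin 3 × ZMod n) ℂ) (i j : Fin 3) (x y : ZMod n) :
    ((C ⊗ₖ (1 : Matrix (ZMod n) (ZMod n) ℂ)) * ρ *
      (C ⊗ₖ (1 : Matrix (ZMod n) (ZMod n) ℂ))ᴴ) (i, x) (j, y) =
    ∑ k : Fin 3, ∑ l : Fin 3, C i k * ρ (k, x) (l, y) * star (C j l) := by
  simp [mul_apply, conjTranspose_apply, Fintype.sum_prod_type, one_apply,
    apply_ite (starRingEnd ℂ), mul_ite, ite_mul, mul_zero, zero_mul,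
    Finset.sum_ite_eq, Finset.sum_ite_eq', Finset.sum_mul, Finset.mul_sum]
  rw [Finset.sum_comm]

lemma shift_entry (n : ℕ) [NeZero n] (a : ℕ)
    (M : Matrix (Fin 3 × ZMod n) (Fin 3 × ZMod n) ℂ) (i j : Fin 3) (x y : ZMod n) :
    (livelyShift n a * M * (livelyShift n a)ᴴ) (i, x) (j, y) =
    M (i, x - livelyDelta n a i) (j, y - livelyDelta n a j) := by
  simp only [mul_apply, conjTranspose_apply, livelyShift, Fintype.sum_prod_type,
    ← sub_eq_iff_eq_add, ite_and]
  simp [apply_ite (starRingEnd ℂ), mul_ite, ite_mul, mul_zero, zero_mul,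
    Finset.sum_ite_eq, Finset.sum_ite_eq', eq_comm]

lemma inv_coin (n : ℕ) [NeZero n] (C : Matrix (Fin 3) (Fin 3) ℂ)
    (hC : C ∈ Matrix.unitaryGroup (Fin 3) ℂ)
    (ρ : Matrix (Fin 3 × ZMod n) (Fin 3 × ZMod n) ℂ) (h : LWInv n ρ) :
    LWInv n ((C ⊗ₖ (1 : Matrix (ZMod n) (ZMod n) ℂ)) * ρ *
      (C ⊗ₖ (1 : Matrix (ZMod n) (ZMod n) ℂ))ᴴ) := by
  intro d i j
  simp only [coin_entry]
  rw [Finset.sum_comm]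
  have : ∀ k : Fin 3, ∑ l : Fin 3, ∑ x : ZMod n,
      C i k * ρ (k, x) (l, x + d) * star (C j l)
      = ∑ l : Fin 3, C i k * (if k = l ∧ d = 0 then (1/3:ℂ) else 0) * star (C j l) := by
    intro k
    refine Finset.sum_congr rfl fun l _ => ?_
    rw [← h d k l, Finset.mul_sum, Finset.sum_mul]
  rw [Finset.sum_congr rfl (fun k _ => Finset.sum_comm)]
  simp only [this]
  by_cases hd : d = 0
  · subst hd
    have hu : C * Cᴴ = 1 := (Matrix.mem_unitaryGroup_iff).mp hC
    have := congrArg (fun M : Matrix (Fin 3) (Fin 3) ℂ => M i j) hu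
    simp only [mul_apply, conjTranspose_apply, one_apply] at this
    simp only [and_true]
    calc ∑ k : Fin 3, ∑ l : Fin 3, C i k * (if k = l then (1/3:ℂ) else 0) * star (C j l)
        = ∑ k : Fin 3, C i k * (1/3:ℂ) * star (C j k) := by
          refine Finset.sum_congr rfl fun k _ => ?_
          simp [mul_ite, ite_mul, Finset.sum_ite_eq, Finset.sum_ite_eq']
      _ = (1/3:ℂ) * ∑ k : Fin 3, C i k * star (C j k) := by
          rw [Finset.mul_sum]; exact Finset.sum_congr rfl fun k _ => by ring
      _ = if i = j then (1/3:ℂ) else 0 := by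
          rw [this]; split <;> simp
  · simp [hd]

lemma inv_shift (n : ℕ) [NeZero n] (a : ℕ)
    (M : Matrix (Fin 3 × ZMod n) (Fin 3 × ZMod n) ℂ) (h : LWInv n M) :
    LWInv n (livelyShift n a * M * (livelyShift n a)ᴴ) := by
  intro d i j
  simp only [shift_entry]
  by_cases hij : i = j
  · subst hij
    have : ∑ x : ZMod n, M (i, x - livelyDelta n a i) (i, x + d - livelyDelta n a i)
        = ∑ y : ZMod n, M (i, y) (i, y + d) := by
      refine Fintype.sum_equiv (Equiv.subRight (livelyDelta n a i)) _ _ fun x => ?_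
      simp [Equiv.subRight]
      ring_nf
    rw [this, h d i i]
  · rw [if_neg (fun hc => hij hc.1)]
    have : ∀ x : ZMod n, (x + d - livelyDelta n a j)
        = (x - livelyDelta n a i) + (d + livelyDelta n a i - livelyDelta n a j) := by
      intro x; ring
    calc ∑ x : ZMod n, M (i, x - livelyDelta n a i) (j, x + d - livelyDelta n a j)
        = ∑ x : ZMod n, M (i, x - livelyDelta n a i)
            (j, (x - livelyDelta n a i) + (d + livelyDelta n a i - livelyDelta n a j)) := by
          refine Finset.sum_congr rfl fun x _ => by rw [this]
      _ = ∑ y : ZMod n, M (i, y) (j, y + (d + livelyDelta n a i - livelyDelta n a j)) := by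
          refine Fintype.sum_equiv (Equiv.subRight (livelyDelta n a i)) _ _ fun x => ?_
          simp [Equiv.subRight]
      _ = 0 := by rw [h]; try simp [hij]

lemma inv_init (n : ℕ) [NeZero n] (x₀ : ZMod n) : LWInv n (rhoInit n x₀) := by
  intro d i j
  by_cases hd : d = 0
  · subst hd
    simp only [add_zero, rhoInit, Matrix.smul_apply, kroneckerMap_apply, vecMulVec_apply,
      Pi.star_apply, posKet, one_apply, smul_eq_mul]
    simp [apply_ite (starRingEnd ℂ), mul_ite, ite_mul, mul_zero, zero_mul, mul_one,
      Finset.mul_sum, Finset.sum_ite_eq, Finset.sum_ite_eq']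
  · rw [if_neg (by simp [hd])]
    refine Finset.sum_eq_zero fun x _ => ?_
    simp only [rhoInit, Matrix.smul_apply, kroneckerMap_apply, vecMulVec_apply,
      Pi.star_apply, posKet, one_apply, smul_eq_mul]
    by_cases h1 : x = x₀
    · simp [h1, hd]
    · simp [h1]

theorem lively_walk_cannot_be_trapped (n : ℕ) [NeZero n] (a : ℕ)
    (ha : a ≤ n - 1) (ha0 : a ≠ 0) (x₀ : ZMod n)
    (Ct : ℕ → Matrix (Fin 3) (Fin 3) ℂ)
    (hCt : ∀ t, Ct t ∈ Matrix.unitaryGroup (Fin 3) ℂ)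
    (ρ : ℕ → Matrix (Fin 3 × ZMod n) (Fin 3 × ZMod n) ℂ)
    (hρ0 : ρ 0 = rhoInit n x₀)
    (hρ : ∀ t, ρ (t + 1) =
      (livelyShift n a * (Ct t ⊗ₖ (1 : Matrix (ZMod n) (ZMod n) ℂ))) * ρ t *
      (livelyShift n a * (Ct t ⊗ₖ (1 : Matrix (ZMod n) (ZMod n) ℂ)))ᴴ) :
    ∀ t : ℕ, expectedDrift n a (Ct t) (ρ t) = (a : ℝ) / 3 ∧ (a : ℝ) / 3 ≠ 0 := by
  have hinv : ∀ t, LWInv n (ρ t) := by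
    intro t
    induction t with
    | zero => rw [hρ0]; exact inv_init n x₀
    | succ t ih =>
      have heq : ρ (t + 1) = livelyShift n a *
          ((Ct t ⊗ₖ (1 : Matrix (ZMod n) (ZMod n) ℂ)) * ρ t *
            (Ct t ⊗ₖ (1 : Matrix (ZMod n) (ZMod n) ℂ))ᴴ) * (livelyShift n a)ᴴ := by
        rw [hρ t, conjTranspose_mul]
        noncomm_ring
      rw [heq]
      exact inv_shift n a _ (inv_coin n (Ct t) (hCt t) (ρ t) ih)
  intro t
  constructor
  · have hc : ∀ c : Fin 3, ∑ x : ZMod n,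
        (((Ct t ⊗ₖ (1 : Matrix (ZMod n) (ZMod n) ℂ)) * ρ t *
          (Ct t ⊗ₖ (1 : Matrix (ZMod n) (ZMod n) ℂ))ᴴ) (c, x) (c, x)).re = 1/3 := by
      intro c
      have h0 := inv_coin n (Ct t) (hCt t) (ρ t) (hinv t) 0 c c
      simp only [add_zero, and_self, if_true, eq_self_iff_true] at h0
      have : (∑ x : ZMod n,
          (((Ct t ⊗ₖ (1 : Matrix (ZMod n) (ZMod n) ℂ)) * ρ t *
            (Ct t ⊗ₖ (1 : Matrix (ZMod n) (ZMod n) ℂ))ᴴ) (c, x) (c, x))).re = (1/3 : ℂ).re := by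
        rw [h0]
      simpa [Complex.re_sum] using this
    unfold expectedDrift
    simp only [hc]
    rw [Fin.sum_univ_three]
    simp [intDelta]
    ring
  · exact div_ne_zero (Nat.cast_ne_zero.mpr ha0) (by norm_num)
end
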